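/- Let c, τ ∈ ℝ with 1 + cτ ≠ 0. Suppose ũ, ṽ : ℝ → ℝ are differentiable and satisfy, for all ξ ∈ ℝ, ũ′(ξ)·(1 + cτ(ũ(ξ) − c)) = ṽ(ξ) and ṽ′(ξ) = (c − ũ(ξ)/2)·ũ(ξ)/(1 + cτ). Define H(u, v) = v²/2 − (u²/(1 + cτ))·(−(cτ/8)·u² + ((3c²τ − 1)/6)·u + c(1 − c²τ)/2). Then the function ξ ↦ H(ũ(ξ), ṽ(ξ)) is constant on ℝ, i.e., H is a first integral of the KdVH traveling-wave system. -/

import Mathlib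

/-- `H(u, v) = v²/2 − (u²/(1+cτ))(−(cτ/8)u² + ((3c²τ−1)/6)u + c(1−c²τ)/2)` is a first
integral of the KdVH traveling-wave system. -/
theorem kdvh_first_integral (c τ : ℝ) (hcτ : 1 + c * τ ≠ 0)
    (u v : ℝ → ℝ) (hu : Differentiable ℝ u) (hv : Differentiable ℝ v)
    (h1 : ∀ ξ : ℝ, deriv u ξ * (1 + c * τ * (u ξ - c)) = v ξ)
    (h2 : ∀ ξ : ℝ, deriv v ξ = (c - u ξ / 2) * u ξ / (1 + c * τ))
    (H : ℝ → ℝ → ℝ)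
    (hH : ∀ x y : ℝ, H x y = y ^ 2 / 2 -
      x ^ 2 / (1 + c * τ) *
        (-(c * τ / 8) * x ^ 2 + (3 * c ^ 2 * τ - 1) / 6 * x + c * (1 - c ^ 2 * τ) / 2)) :
    ∀ ξ₁ ξ₂ : ℝ, H (u ξ₁) (v ξ₁) = H (u ξ₂) (v ξ₂) := by
  have e : (fun ξ => H (u ξ) (v ξ)) = fun ξ =>
      v ξ ^ 2 / 2 - u ξ ^ 2 / (1 + c * τ) *
        (-(c * τ / 8) * u ξ ^ 2 + (3 * c ^ 2 * τ - 1) / 6 * u ξ + c * (1 - c ^ 2 * τ) / 2) := by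
    funext ξ; rw [hH]
  have key : ∀ ξ : ℝ, HasDerivAt (fun ξ => H (u ξ) (v ξ)) 0 ξ := by
    intro ξ
    have hu' := (hu ξ).hasDerivAt
    have hv' := (hv ξ).hasDerivAt
    set u' := deriv u ξ with hu'def
    set v' := deriv v ξ with hv'def
    have A : HasDerivAt (fun ξ => v ξ ^ 2 / 2) (2 * v ξ ^ 1 * v' / 2) ξ :=
      (hv'.pow 2).div_const 2
    have B : HasDerivAt (fun ξ => u ξ ^ 2 / (1 + c * τ)) (2 * u ξ ^ 1 * u' / (1 + c * τ)) ξ :=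
      (hu'.pow 2).div_const _
    have C := ((((hu'.pow 2).const_mul (-(c * τ / 8))).add
        (hu'.const_mul ((3 * c ^ 2 * τ - 1) / 6))).add_const (c * (1 - c ^ 2 * τ) / 2))
    have D := A.sub (B.mul C)
    rw [e]
    refine D.congr_deriv ?_
    have hv1 : v ξ = u' * (1 + c * τ * (u ξ - c)) := (h1 ξ).symm
    have hv2 : v' = (c - u ξ / 2) * u ξ / (1 + c * τ) := h2 ξ
    rw [hv1, hv2]
    simp only [Pi.add_apply, Pi.pow_apply]
    field_simp
    ring
  have hd : Differentiable ℝ (fun ξ => H (u ξ) (v ξ)) := fun ξ => (key ξ).differentiableAt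
  have hz : ∀ ξ, deriv (fun ξ => H (u ξ) (v ξ)) ξ = 0 := fun ξ => (key ξ).deriv
  exact fun ξ₁ ξ₂ => is_const_of_deriv_eq_zero hd hz ξ₁ ξ₂
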